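/- Suppose J′, J^Θ ⊆ ℤ/fℤ satisfy: i ∈ J′ ⟺ i ∈ J^Θ for all i ∉ J₀; and for every ν ∈ M̃, either (ν ∈ J′, T_ν ⊆ J′ and T_ν ∩ J^Θ = ∅) or (ν ∉ J′, T_ν ∩ J′ = ∅ and T_ν ⊆ J^Θ). Set s′ = s(b′,J′), t′ = t(b′,J′), s^Θ = s(b^Θ,J^Θ), t^Θ = t(b^Θ,J^Θ), and define s^γ_i = s′_i if i ∈ J′ and s^γ_i = s^Θ_i if i ∉ J′, and t^γ_i = t′_i if i ∈ J′ and t^γ_i = t^Θ_i if i ∉ J′. Then for every i ∈ ℤ/fℤ: A_i(s^γ, s^Θ) = p^f − 1 if i ∈ J′ and i+1 ∈ J₀, else 0; A_i(t^Θ, t^γ) = p^f − 1 if i ∈ J′ and i+1 ∈ J₀, else 0; A_i(s^γ, s′) = p^f − 1 if i ∉ J′ and i+1 ∈ J₀, else 0; and A_i(t′, t^γ) = p^f − 1 if i ∉ J′ and i+1 ∈ J₀, else 0. -/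

import Mathlib

open scoped Classical
noncomputable section

/-- `Σ(v) = Σ_{i=0}^{f−1} v_i · p^{f−1−i}`. -/
def Sig (p f : ℕ) (v : ZMod f → ℤ) : ℤ :=
  ∑ i ∈ Finset.range f, v (i : ZMod f) * (p : ℤ) ^ (f - 1 - i)

/-- `A_i(c,d) = Σ_{j=1}^{f} p^{f−j} · (c_{i+j} − d_{i+j})`. -/
def Ai (p f : ℕ) (c d : ZMod f → ℤ) (i : ZMod f) : ℤ :=
  ∑ j ∈ Finset.Icc 1 f, (p : ℤ) ^ (f - j) * (c (i + (j : ZMod f)) - d (i + (j : ZMod f)))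

/-- `T_ν`: the maximal run of indices with `k`-value 1 following `ν`. -/
def Trun (f : ℕ) (k : ZMod f → ℤ) (ν : ZMod f) : Set (ZMod f) :=
  {i | ∃ s : ℕ, 1 ≤ s ∧ i = ν + (s : ZMod f) ∧
        ∀ j : ℕ, 1 ≤ j → j ≤ s → k (ν + (j : ZMod f)) = 1}

/-- `b_{i,1} = k_i − 1`. -/
def b1 (f : ℕ) (k : ZMod f → ℤ) : ZMod f → ℤ := fun i => k i - 1

/-- the constantly zero second component. -/
def zero2 (f : ℕ) : ZMod f → ℤ := fun _ => 0

/-- `b′_{i,1}`. -/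
def bp1 (p f : ℕ) (k : ZMod f → ℤ) : ZMod f → ℤ := fun i =>
  if k i = 1 then (if k (i + 1) = 1 then (p : ℤ) - 1 else (p : ℤ))
  else (if k (i + 1) = 1 then k i - 2 else k i - 1)

/-- `b^μ_{i,1}`. -/
def bmu1 (p f : ℕ) (k : ZMod f → ℤ) (μ : ZMod f) : ZMod f → ℤ := fun i =>
  if i = μ then k μ - 1 else bp1 p f k i

/-- `b^μ_{i,2}`. -/
def bmu2 (f : ℕ) (μ : ZMod f) : ZMod f → ℤ := fun i => if i = μ then -1 else 0

/-- `b^Θ_{i,1}`. -/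
def bth1 (p f : ℕ) (k : ZMod f → ℤ) : ZMod f → ℤ := fun i =>
  if k i = 1 then (if k (i + 1) = 1 then (p : ℤ) - 1 else (p : ℤ)) else k i - 1

/-- `b^Θ_{i,2}`. -/
def bth2 (f : ℕ) (k : ZMod f → ℤ) : ZMod f → ℤ := fun i =>
  if k i ≠ 1 ∧ k (i + 1) = 1 then -1 else 0

/-- `s_i(c,S) = c_{i,1}` if `i ∈ S`, else `c_{i,2}`. -/
def sW (f : ℕ) (c1 c2 : ZMod f → ℤ) (S : Set (ZMod f)) : ZMod f → ℤ :=
  fun i => if i ∈ S then c1 i else c2 i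

/-- `t_i(c,S) = c_{i,2}` if `i ∈ S`, else `c_{i,1}`. -/
def tW (f : ℕ) (c1 c2 : ZMod f → ℤ) (S : Set (ZMod f)) : ZMod f → ℤ :=
  fun i => if i ∈ S then c2 i else c1 i

/-- The set `𝒫′` of Definition 3.7 of the paper. -/
def memP' (p f : ℕ) (r : ZMod f → ℤ) : Prop :=
  (∀ i, r i = 0 ∨ r i = 1 ∨ r i = (p : ℤ) - 1 ∨ r i = (p : ℤ)) ∧
  (∀ i, r i = (p : ℤ) → (r (i + 1) = 0 ∨ r (i + 1) = 1)) ∧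
  (∀ i, (r i = 1 ∨ r i = (p : ℤ) - 1) → (r (i + 1) = (p : ℤ) - 1 ∨ r (i + 1) = (p : ℤ))) ∧
  (∀ i, r i = 0 →
    ((∀ j, r j = 0) ∨
      ∃ s t : ℕ, 1 ≤ s ∧ 1 ≤ t ∧
        (∀ j : ℕ, 1 ≤ j → j ≤ s - 1 → r (i + (j : ZMod f)) = 0) ∧
        r (i + (s : ZMod f)) = 1 ∧
        (∀ j : ℕ, 1 ≤ j → j ≤ t - 1 → r (i - (j : ZMod f)) = 0) ∧
        r (i - (t : ZMod f)) = (p : ℤ)))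

/-- The exceptional case of Theorem 3.9 of the paper. -/
def Exceptional (p f : ℕ) (r : ZMod f → ℤ) (J : Set (ZMod f)) : Prop :=
  memP' p f r ∧ (∀ i, (r i = (p : ℤ) - 1 ∨ r i = (p : ℤ)) → i ∈ J) ∧
    (∀ i, r i = 1 → i ∉ J)


lemma stmt17_telescope (p f : ℕ) (c d e : ZMod f → ℤ)
    (hD : ∀ j : ZMod f, c j - d j = (p:ℤ) * e (j - 1) - e j) (i : ZMod f) :
    Ai p f c d i = ((p:ℤ)^f - 1) * e i := by
  have hfz : ((f : ℕ) : ZMod f) = 0 := ZMod.natCast_self f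
  unfold Ai
  rw [← Finset.Ico_add_one_right_eq_Icc, Finset.sum_Ico_eq_sum_range]
  simp only [Nat.add_sub_cancel]
  have key : ∀ j ∈ Finset.range f,
      (p:ℤ)^(f - (1 + j)) * (c (i + ((1+j : ℕ) : ZMod f)) - d (i + ((1+j:ℕ) : ZMod f)))
      = (fun m : ℕ => (p:ℤ)^(f - m) * e (i + (m : ZMod f))) j
        - (fun m : ℕ => (p:ℤ)^(f-m) * e (i + (m : ZMod f))) (j+1) := by
    intro j hj
    have hjf : j < f := Finset.mem_range.mp hj
    rw [hD]
    have h1 : i + ((1 + j : ℕ) : ZMod f) - 1 = i + (j : ZMod f) := by push_cast; ring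
    have h2 : i + ((1 + j:ℕ) : ZMod f) = i + ((j+1:ℕ) : ZMod f) := by push_cast; ring
    rw [h1, h2]
    have hpow : (p:ℤ)^(f - (1+j)) * (p:ℤ) = (p:ℤ)^(f - j) := by
      rw [← pow_succ]
      congr 1
      omega
    have h3 : f - (1+j) = f - (j+1) := by omega
    simp only [h3]
    rw [mul_sub, ← mul_assoc]
    rw [show f - (j+1) = f - (1+j) by omega, hpow, show f - (1+j) = f - (j+1) by omega]
  rw [Finset.sum_congr rfl key, Finset.sum_range_sub']
  simp [hfz, Nat.sub_self]
  ring

lemma stmt17_findNu (f : ℕ) (hf : 1 ≤ f) (k : ZMod f → ℤ) (hnotone : ∃ i, k i ≠ 1)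
    (j : ZMod f) (hj : k j = 1) :
    ∃ ν, k ν ≠ 1 ∧ k (ν + 1) = 1 ∧ j ∈ Trun f k ν ∧ (j - 1 = ν ∨ j - 1 ∈ Trun f k ν) := by
  haveI : NeZero f := ⟨by omega⟩
  classical
  obtain ⟨i0, hi0⟩ := hnotone
  have hex : ∃ t : ℕ, 1 ≤ t ∧ k (j - (t : ZMod f)) ≠ 1 := by
    refine ⟨(j - i0).val, ?_, ?_⟩
    · refine ZMod.val_pos.mpr ?_
      intro h
      rw [sub_eq_zero] at h
      exact hi0 (h ▸ hj)
    · rw [ZMod.natCast_val, ZMod.cast_id]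
      simpa using hi0
  set t := Nat.find hex with ht
  obtain ⟨ht1, htk⟩ : 1 ≤ t ∧ k (j - (t : ZMod f)) ≠ 1 := Nat.find_spec hex
  have hmin : ∀ s : ℕ, 1 ≤ s → s < t → k (j - (s : ZMod f)) = 1 := by
    intro s h1 h2
    by_contra h
    exact Nat.find_min hex (ht ▸ h2) ⟨h1, h⟩
  set ν := j - (t : ZMod f) with hν
  have hcast : ∀ m : ℕ, m ≤ t → ν + (m : ZMod f) = j - ((t - m : ℕ) : ZMod f) := by
    intro m hm
    rw [Nat.cast_sub hm, hν]
    ring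
  have hrun : ∀ m : ℕ, 1 ≤ m → m ≤ t → k (ν + (m : ZMod f)) = 1 := by
    intro m h1 h2
    rw [hcast m h2]
    rcases eq_or_lt_of_le h2 with h | h
    · subst h; simpa using hj
    · exact hmin (t - m) (by omega) (by omega)
  refine ⟨ν, htk, ?_, ⟨t, ht1, by rw [hcast t le_rfl]; simp, hrun⟩, ?_⟩
  · have := hrun 1 le_rfl ht1
    simpa using this
  · rcases eq_or_lt_of_le ht1 with h | h
    · left
      rw [hν, ← h]
      push_cast
      ring
    · right
      refine ⟨t - 1, by omega, ?_, fun m h1 h2 => hrun m h1 (by omega)⟩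
      rw [hcast (t - 1) (by omega)]
      have : (t - (t - 1) : ℕ) = 1 := by omega
      rw [this]
      push_cast
      ring

/-- the carry indicator used in the telescoping computation. -/
def stmt17_e (f : ℕ) (k : ZMod f → ℤ) (J : Set (ZMod f)) : ZMod f → ℤ :=
  fun i => if i ∈ J ∧ k (i + 1) = 1 then 1 else 0

/-- Lemma A.7 of the paper: the values of the `A_i` comparing the auxiliary weight
`(s^γ, t^γ)` with `(s′, t′)` and `(s^Θ, t^Θ)`. -/
theorem stmt17 (p f : ℕ) (hp : p.Prime) (hodd : Odd p) (hf : 1 ≤ f)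
    (k : ZMod f → ℤ)
    (hk : ∀ i, 1 ≤ k i ∧ k i ≤ (p : ℤ))
    (hone : ∃ i, k i = 1) (hnotone : ∃ i, k i ≠ 1)
    (h21 : ∀ i, ¬(k i = 2 ∧ k (i + 1) = 1))
    (J' JTh : Set (ZMod f))
    (hagree : ∀ i, k i ≠ 1 → (i ∈ J' ↔ i ∈ JTh))
    (hblocks : ∀ ν, (k ν ≠ 1 ∧ k (ν + 1) = 1) →
      (ν ∈ J' ∧ Trun f k ν ⊆ J' ∧ Trun f k ν ∩ JTh = ∅) ∨
      (ν ∉ J' ∧ Trun f k ν ∩ J' = ∅ ∧ Trun f k ν ⊆ JTh))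
    (sg tg : ZMod f → ℤ)
    (hsg : ∀ i, sg i = if i ∈ J' then sW f (bp1 p f k) (zero2 f) J' i
      else sW f (bth1 p f k) (bth2 f k) JTh i)
    (htg : ∀ i, tg i = if i ∈ J' then tW f (bp1 p f k) (zero2 f) J' i
      else tW f (bth1 p f k) (bth2 f k) JTh i) :
    ∀ i : ZMod f,
      Ai p f sg (sW f (bth1 p f k) (bth2 f k) JTh) i
        = (if i ∈ J' ∧ k (i + 1) = 1 then (p : ℤ) ^ f - 1 else 0) ∧
      Ai p f (tW f (bth1 p f k) (bth2 f k) JTh) tg i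
        = (if i ∈ J' ∧ k (i + 1) = 1 then (p : ℤ) ^ f - 1 else 0) ∧
      Ai p f sg (sW f (bp1 p f k) (zero2 f) J') i
        = (if i ∉ J' ∧ k (i + 1) = 1 then (p : ℤ) ^ f - 1 else 0) ∧
      Ai p f (tW f (bp1 p f k) (zero2 f) J') tg i
        = (if i ∉ J' ∧ k (i + 1) = 1 then (p : ℤ) ^ f - 1 else 0) := by
  classical
  have hsub : ∀ j : ZMod f, j - 1 + 1 = j := fun j => by ring
  have hsit : ∀ j : ZMod f, k j = 1 →
      (j ∈ J' ∧ j ∉ JTh ∧ j - 1 ∈ J') ∨ (j ∉ J' ∧ j ∈ JTh ∧ j - 1 ∉ J') := by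
    intro j hj
    obtain ⟨ν, hν1, hν2, hjT, hj1⟩ := stmt17_findNu f hf k hnotone j hj
    rcases hblocks ν ⟨hν1, hν2⟩ with ⟨hνJ, hTJ, hTE⟩ | ⟨hνJ, hTE, hTJ⟩
    · exact Or.inl ⟨hTJ hjT, fun h => Set.eq_empty_iff_forall_notMem.mp hTE j ⟨hjT, h⟩,
        hj1.elim (fun h => by rw [h]; exact hνJ) (fun h => hTJ h)⟩
    · exact Or.inr ⟨fun h => Set.eq_empty_iff_forall_notMem.mp hTE j ⟨hjT, h⟩, hTJ hjT,
        hj1.elim (fun h => by rw [h]; exact hνJ)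
          (fun h hh => Set.eq_empty_iff_forall_notMem.mp hTE (j - 1) ⟨h, hh⟩)⟩
  intro i
  have hD1 : ∀ j : ZMod f, sg j - sW f (bth1 p f k) (bth2 f k) JTh j
      = (p:ℤ) * stmt17_e f k J' (j - 1) - stmt17_e f k J' j := by
    intro j
    rw [hsg j]
    simp only [stmt17_e, hsub]
    by_cases hkj : k j = 1
    · rcases hsit j hkj with ⟨h1, h2, h3⟩ | ⟨h1, h2, h3⟩
      · by_cases hk1 : k (j + 1) = 1 <;>
          simp [sW, bp1, bth1, bth2, h1, h2, h3, hkj, hk1] <;> ring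
      · by_cases hk1 : k (j + 1) = 1 <;>
          simp [sW, h1, h3, hkj, hk1]
    · by_cases hjJ : j ∈ J'
      · have hjT : j ∈ JTh := (hagree j hkj).mp hjJ
        by_cases hk1 : k (j + 1) = 1 <;>
          simp [sW, bp1, bth1, hjJ, hjT, hkj, hk1] <;> ring
      · simp [sW, hjJ, hkj]
  have hD2 : ∀ j : ZMod f, tW f (bth1 p f k) (bth2 f k) JTh j - tg j
      = (p:ℤ) * stmt17_e f k J' (j - 1) - stmt17_e f k J' j := by
    intro j
    rw [htg j]
    simp only [stmt17_e, hsub]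
    by_cases hkj : k j = 1
    · rcases hsit j hkj with ⟨h1, h2, h3⟩ | ⟨h1, h2, h3⟩
      · by_cases hk1 : k (j + 1) = 1 <;>
          simp [tW, bth1, bth2, zero2, h1, h2, h3, hkj, hk1] <;> ring
      · by_cases hk1 : k (j + 1) = 1 <;>
          simp [tW, h1, h3, hkj, hk1]
    · by_cases hjJ : j ∈ J'
      · have hjT : j ∈ JTh := (hagree j hkj).mp hjJ
        by_cases hk1 : k (j + 1) = 1 <;>
          simp [tW, bth1, bth2, zero2, hjJ, hjT, hkj, hk1] <;> ring
      · simp [tW, hjJ, hkj]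
  have hD3 : ∀ j : ZMod f, sg j - sW f (bp1 p f k) (zero2 f) J' j
      = (p:ℤ) * stmt17_e f k J'ᶜ (j - 1) - stmt17_e f k J'ᶜ j := by
    intro j
    rw [hsg j]
    simp only [stmt17_e, hsub, Set.mem_compl_iff]
    by_cases hkj : k j = 1
    · rcases hsit j hkj with ⟨h1, h2, h3⟩ | ⟨h1, h2, h3⟩
      · by_cases hk1 : k (j + 1) = 1 <;>
          simp [sW, h1, h3, hkj, hk1]
      · by_cases hk1 : k (j + 1) = 1 <;>
          simp [sW, bth1, bth2, zero2, h1, h2, h3, hkj, hk1] <;> ring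
    · by_cases hjJ : j ∈ J'
      · simp [sW, hjJ, hkj]
      · have hjT : j ∉ JTh := fun h => hjJ ((hagree j hkj).mpr h)
        by_cases hk1 : k (j + 1) = 1 <;>
          simp [sW, bth1, bth2, zero2, hjJ, hjT, hkj, hk1] <;> ring
  have hD4 : ∀ j : ZMod f, tW f (bp1 p f k) (zero2 f) J' j - tg j
      = (p:ℤ) * stmt17_e f k J'ᶜ (j - 1) - stmt17_e f k J'ᶜ j := by
    intro j
    rw [htg j]
    simp only [stmt17_e, hsub, Set.mem_compl_iff]
    by_cases hkj : k j = 1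
    · rcases hsit j hkj with ⟨h1, h2, h3⟩ | ⟨h1, h2, h3⟩
      · by_cases hk1 : k (j + 1) = 1 <;>
          simp [tW, zero2, h1, h3, hkj, hk1]
      · by_cases hk1 : k (j + 1) = 1 <;>
          simp [tW, bp1, bth1, bth2, zero2, h1, h2, h3, hkj, hk1] <;> ring
    · by_cases hjJ : j ∈ J'
      · simp [tW, zero2, hjJ, hkj]
      · have hjT : j ∉ JTh := fun h => hjJ ((hagree j hkj).mpr h)
        by_cases hk1 : k (j + 1) = 1 <;>
          simp [tW, bp1, bth1, bth2, zero2, hjJ, hjT, hkj, hk1] <;> ring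
  refine ⟨?_, ?_, ?_, ?_⟩
  · rw [stmt17_telescope p f _ _ _ hD1 i]
    simp only [stmt17_e]
    by_cases h : i ∈ J' ∧ k (i + 1) = 1 <;> simp [h]
  · rw [stmt17_telescope p f _ _ _ hD2 i]
    simp only [stmt17_e]
    by_cases h : i ∈ J' ∧ k (i + 1) = 1 <;> simp [h]
  · rw [stmt17_telescope p f _ _ _ hD3 i]
    simp only [stmt17_e, Set.mem_compl_iff]
    by_cases h : i ∉ J' ∧ k (i + 1) = 1 <;> simp [h]
  · rw [stmt17_telescope p f _ _ _ hD4 i]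
    simp only [stmt17_e, Set.mem_compl_iff]
    by_cases h : i ∉ J' ∧ k (i + 1) = 1 <;> simp [h]
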